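/- Fix positive integers q and n with 1 ≤ n ≤ q and real numbers λ > 0, μ > 0, κ ∈ ℝ, and consider the system dx/dt = y, dy/dt = −x + t^{−n/q}·y·(λ + κ·x − μ·(x² + y²)/2) for t ≥ 1. Then the circle {(x,y) : (x² + y²)/2 = λ/μ} is a stable limit cycle: for every ε > 0 there exist δ* > 0 and t* ≥ 1 such that for every τ0 ≥ t* and every solution (x,y) with |(x(τ0)² + y(τ0)²)/2 − λ/μ| ≤ δ*, one has |(x(t)² + y(t)²)/2 − λ/μ| < ε for all t ≥ τ0, and moreover (x(t)² + y(t)²)/2 → λ/μ as t → ∞. -/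

import Mathlib

open Filter Set Real

set_option maxHeartbeats 64000000

/-- A solution on `[τ0,∞)` of the system
`dx/dt = y`, `dy/dt = −x + t^{−n/q}·y·(λ + κ·x − μ·(x² + y²)/2)`. -/
def IsCycleSol (q n : ℕ) (lam μ κ τ0 : ℝ) (x y : ℝ → ℝ) : Prop :=
  ∀ t ≥ τ0, HasDerivAt x (y t) t ∧
    HasDerivAt y (-x t + t ^ (-(n:ℝ)/(q:ℝ)) * y t *
      (lam + κ * x t - μ * ((x t) ^ 2 + (y t) ^ 2) / 2)) t

private lemma mbd {a b c d : ℝ} (h1 : |a| ≤ c) (h2 : |b| ≤ d) : |a * b| ≤ c * d := by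
  rw [abs_mul]
  exact mul_le_mul h1 h2 (abs_nonneg _) ((abs_nonneg a).trans h1)

private lemma abs_sub' (a b : ℝ) : |a - b| ≤ |a| + |b| := by
  rw [sub_eq_add_neg]
  exact (abs_add_le _ _).trans (by rw [abs_neg])

private lemma abs_add5 {a b c d e A B C D E : ℝ} (ha : |a| ≤ A) (hb : |b| ≤ B)
    (hc : |c| ≤ C) (hd : |d| ≤ D) (he : |e| ≤ E) :
    |a + b + c + d + e| ≤ A + B + C + D + E := by
  have h1 := abs_add_le (a + b + c + d) e
  have h2 := abs_add_le (a + b + c) d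
  have h3 := abs_add_le (a + b) c
  have h4 := abs_add_le a b
  linarith

private lemma abs_add2 {a b A B : ℝ} (ha : |a| ≤ A) (hb : |b| ≤ B) :
    |a + b| ≤ A + B := (abs_add_le a b).trans (by linarith)

private lemma abs_le_one_add3 {X Y R : ℝ} (h : X ^ 2 + Y ^ 2 ≤ 3 * R) :
    |X| ≤ 1 + 3 * R := by
  nlinarith [sq_abs X, sq_nonneg (|X| - 1), sq_nonneg Y, abs_nonneg X]

private lemma abs_le_of_sq {z c : ℝ} (hc : 0 ≤ c) (h : z ^ 2 ≤ c ^ 2) : |z| ≤ c := by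
  nlinarith [sq_abs z, sq_nonneg (|z| - c), abs_nonneg z]

private lemma sq_lt_of_abs_lt {z c : ℝ} (h : |z| < c) : z ^ 2 < c ^ 2 := by
  nlinarith [sq_abs z, abs_nonneg z]

/-- Continuity-only "no upcrossing with a gap" lemma on an interval. -/
lemma no_crossing (g : ℝ → ℝ) (a b c : ℝ)
    (hcont : ∀ t, a ≤ t → t ≤ b → ContinuousAt g t)
    (h0 : g a < c)
    (hgap : ∀ t, a ≤ t → t ≤ b → g t ≤ c → g t < c) :
    ∀ t, a ≤ t → t ≤ b → g t < c := by
  by_contra h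
  push_neg at h
  obtain ⟨z, hza, hzb, hzc⟩ := h
  set A := {t : ℝ | a ≤ t ∧ t ≤ b ∧ c ≤ g t} with hA
  have hne : A.Nonempty := ⟨z, hza, hzb, hzc⟩
  have hbdd : BddBelow A := ⟨a, fun w hw => hw.1⟩
  set t₁ := sInf A with ht₁
  have h1a : a ≤ t₁ := le_csInf hne fun w hw => hw.1
  have h1b : t₁ ≤ b := (csInf_le hbdd ⟨hza, hzb, hzc⟩).trans hzb
  have hc1 : c ≤ g t₁ := by
    obtain ⟨s, hs, hslim⟩ := mem_closure_iff_seq_limit.mp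
      ((isGLB_csInf hne hbdd).mem_closure hne)
    exact ge_of_tendsto (((hcont t₁ h1a h1b).tendsto).comp hslim)
      (Eventually.of_forall fun k => (hs k).2.2)
  have hat : a < t₁ :=
    lt_of_le_of_ne h1a (fun he => absurd (he ▸ hc1) (not_le.mpr h0))
  have hlt : ∀ s, a ≤ s → s < t₁ → g s < c := by
    intro s hsa hst
    by_contra hge
    push_neg at hge
    exact absurd (csInf_le hbdd ⟨hsa, hst.le.trans h1b, hge⟩) (not_le.mpr hst)
  have hle : g t₁ ≤ c := by
    have htt : Tendsto g (nhdsWithin t₁ (Set.Iio t₁)) (nhds (g t₁)) :=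
      ((hcont t₁ h1a h1b).tendsto).mono_left nhdsWithin_le_nhds
    refine le_of_tendsto htt ?_
    filter_upwards [Ioo_mem_nhdsLT_of_mem (⟨hat, le_refl t₁⟩ : t₁ ∈ Set.Ioc a t₁)] with s hs
    exact (hlt s hs.1.le hs.2).le
  exact absurd (hgap t₁ h1a h1b hle) (not_lt.mpr hc1)

/-- Barrier lemma: a differentiable function starting below `c`, whose
derivative is negative whenever it touches `c` (given its history stayed
below), stays below `c`. -/
lemma barrier (f f' : ℝ → ℝ) (a c : ℝ)
    (hd : ∀ t, a ≤ t → HasDerivAt f (f' t) t)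
    (h0 : f a < c)
    (hc : ∀ t, a ≤ t → (∀ s, a ≤ s → s ≤ t → f s ≤ c) → f t = c → f' t < 0) :
    ∀ t, a ≤ t → f t < c := by
  by_contra h
  push_neg at h
  obtain ⟨z, hza, hzc⟩ := h
  set A := {t : ℝ | a ≤ t ∧ c ≤ f t} with hA
  have hne : A.Nonempty := ⟨z, hza, hzc⟩
  have hbdd : BddBelow A := ⟨a, fun w hw => hw.1⟩
  set t₁ := sInf A with ht₁
  have h1a : a ≤ t₁ := le_csInf hne fun w hw => hw.1
  have hc1 : c ≤ f t₁ := by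
    obtain ⟨s, hs, hslim⟩ := mem_closure_iff_seq_limit.mp
      ((isGLB_csInf hne hbdd).mem_closure hne)
    exact ge_of_tendsto (((hd t₁ h1a).continuousAt.tendsto).comp hslim)
      (Eventually.of_forall fun k => (hs k).2)
  have hat : a < t₁ :=
    lt_of_le_of_ne h1a (fun he => absurd (he ▸ hc1) (not_le.mpr h0))
  have hlt : ∀ s, a ≤ s → s < t₁ → f s < c := by
    intro s hsa hst
    by_contra hge
    push_neg at hge
    exact absurd (csInf_le hbdd ⟨hsa, hge⟩) (not_le.mpr hst)
  have hfeq : f t₁ = c := by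
    refine le_antisymm ?_ hc1
    have htt : Tendsto f (nhdsWithin t₁ (Set.Iio t₁)) (nhds (f t₁)) :=
      ((hd t₁ h1a).continuousAt.tendsto).mono_left nhdsWithin_le_nhds
    refine le_of_tendsto htt ?_
    filter_upwards [Ioo_mem_nhdsLT_of_mem (⟨hat, le_refl t₁⟩ : t₁ ∈ Set.Ioc a t₁)] with s hs
    exact (hlt s hs.1.le hs.2).le
  have hist : ∀ s, a ≤ s → s ≤ t₁ → f s ≤ c := by
    intro s hsa hst
    rcases lt_or_eq_of_le hst with h' | h'
    · exact (hlt s hsa h').le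
    · rw [h', hfeq]
  have hneg := hc t₁ h1a hist hfeq
  have hsl : Tendsto (slope f t₁) (nhdsWithin t₁ (Set.Iio t₁)) (nhds (f' t₁)) :=
    (hasDerivAt_iff_tendsto_slope.mp (hd t₁ h1a)).mono_left
      (nhdsWithin_mono _ fun s hs => ne_of_lt hs)
  have hnn : 0 ≤ f' t₁ := by
    refine ge_of_tendsto hsl ?_
    filter_upwards [Ioo_mem_nhdsLT_of_mem (⟨hat, le_refl t₁⟩ : t₁ ∈ Set.Ioc a t₁)] with s hs
    have hfs : f s < c := hlt s hs.1.le hs.2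
    rw [slope_def_field, show f s - f t₁ = -(f t₁ - f s) by ring,
      show s - t₁ = -(t₁ - s) by ring, neg_div_neg_eq]
    apply div_nonneg <;> linarith [hfeq, hs.2]
  exact absurd hneg (not_lt.mpr hnn)

/-- Escape lemma: a nonnegative function whose derivative is `≤ -k/t`
whenever it is `≥ c` must eventually drop below `c`. -/
lemma escape (f f' : ℝ → ℝ) (T k c : ℝ) (hT : 1 ≤ T) (hk : 0 < k)
    (hd : ∀ t, T ≤ t → HasDerivAt f (f' t) t)
    (hnn : ∀ t, T ≤ t → 0 ≤ f t)
    (hdec : ∀ t, T ≤ t → c ≤ f t → f' t ≤ -(k / t)) :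
    ∃ t2, T ≤ t2 ∧ f t2 < c := by
  by_contra h
  push_neg at h
  have hcf : ∀ t, T ≤ t → c ≤ f t := fun t ht => h t ht
  have hpos : ∀ t : ℝ, T ≤ t → (0:ℝ) < t := fun t ht => lt_of_lt_of_le one_pos (hT.trans ht)
  set g := fun t => f t + k * Real.log t with hg
  have hgd : ∀ t, T ≤ t → HasDerivAt g (f' t + k * t⁻¹) t := by
    intro t ht
    exact (hd t ht).add ((Real.hasDerivAt_log (hpos t ht).ne').const_mul k)
  have hanti : AntitoneOn g (Set.Ici T) := by
    apply antitoneOn_of_deriv_nonpos (convex_Ici T)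
    · exact fun t ht => (hgd t ht).continuousAt.continuousWithinAt
    · intro t ht
      rw [interior_Ici] at ht
      exact ((hgd t (le_of_lt ht)).differentiableAt).differentiableWithinAt
    · intro t ht
      rw [interior_Ici] at ht
      rw [(hgd t (le_of_lt ht)).deriv]
      have h1 := hdec t (le_of_lt ht) (hcf t (le_of_lt ht))
      have h2 : k * t⁻¹ = k / t := by rw [div_eq_mul_inv]
      linarith
  set s := (f T + k * Real.log T + 1) / k with hs
  set τ := T + Real.exp s with hτ
  have hτT : T ≤ τ := by
    have := Real.exp_pos s
    simp only [hτ]; linarith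
  have hgle : g τ ≤ g T := hanti (self_mem_Ici) hτT hτT
  have hlog : s ≤ Real.log τ := by
    have h1 : Real.exp s ≤ τ := by
      have : (0:ℝ) < T := hpos T le_rfl
      simp only [hτ]; linarith
    calc s = Real.log (Real.exp s) := (Real.log_exp s).symm
    _ ≤ Real.log τ := Real.log_le_log (Real.exp_pos s) h1
  have hfτ : f τ ≤ f T + k * Real.log T - k * s := by
    have := mul_le_mul_of_nonneg_left hlog hk.le
    simp only [hg] at hgle
    linarith
  have hks : k * s = f T + k * Real.log T + 1 := by
    rw [hs, mul_div_cancel₀ _ hk.ne']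
  have := hnn τ hτT
  linarith

private lemma rex_abs (A B S1 T6 S2 T9 c1 c6 c2 c9 : ℝ)
    (hA0 : 0 ≤ A) (hA1 : A ≤ 1) (hB0 : 0 ≤ B) (hBA : B ≤ A * A)
    (h1 : |S1| ≤ c1) (h6 : |T6| ≤ c6) (h2 : |S2| ≤ c2) (h9 : |T9| ≤ c9) :
    |A * A * S1 + A * A * A * T6 + B * S2 + A * B * T9| ≤ (c1 + c6 + c2 + c9) * (A * A) := by
  have hA2 : (0:ℝ) ≤ A * A := mul_nonneg hA0 hA0
  have hc1 : (0:ℝ) ≤ c1 := (abs_nonneg _).trans h1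
  have hc6 : (0:ℝ) ≤ c6 := (abs_nonneg _).trans h6
  have hc2 : (0:ℝ) ≤ c2 := (abs_nonneg _).trans h2
  have hc9 : (0:ℝ) ≤ c9 := (abs_nonneg _).trans h9
  have f1 : |A * A * S1| ≤ A * A * c1 := by
    rw [abs_mul, abs_mul, abs_of_nonneg hA0]
    nlinarith [mul_le_mul_of_nonneg_left h1 hA2]
  have f2 : |A * A * A * T6| ≤ A * A * c6 := by
    rw [abs_mul, abs_mul, abs_mul, abs_of_nonneg hA0]
    have h0 := abs_nonneg T6
    nlinarith [mul_le_mul_of_nonneg_left h6 (mul_nonneg hA2 hA0),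
      mul_le_mul_of_nonneg_right hA1 (mul_nonneg hA2 hc6)]
  have f3 : |B * S2| ≤ A * A * c2 := by
    rw [abs_mul, abs_of_nonneg hB0]
    have h0 := abs_nonneg S2
    nlinarith [mul_le_mul_of_nonneg_left h2 hB0, mul_le_mul_of_nonneg_right hBA hc2]
  have f4 : |A * B * T9| ≤ A * A * c9 := by
    rw [abs_mul, abs_mul, abs_of_nonneg hA0, abs_of_nonneg hB0]
    have h0 := abs_nonneg T9
    nlinarith [mul_le_mul_of_nonneg_left h9 (mul_nonneg hA0 hB0),
      mul_le_mul_of_nonneg_right hBA hc9,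
      mul_le_mul_of_nonneg_right hA1 (mul_nonneg hB0 hc9),
      mul_le_mul_of_nonneg_left (mul_le_mul_of_nonneg_right hBA hc9) hA0]
  have g1 := abs_add_le (A * A * S1 + A * A * A * T6 + B * S2) (A * B * T9)
  have g2 := abs_add_le (A * A * S1 + A * A * A * T6) (B * S2)
  have g3 := abs_add_le (A * A * S1) (A * A * A * T6)
  nlinarith [g1, g2, g3]

/-- The corrected Lyapunov function. -/
noncomputable def Zf (lam μ κ P : ℝ) (x y : ℝ → ℝ) (s : ℝ) : ℝ :=
  (((x s) ^ 2 + (y s) ^ 2) / 2 - lam / μ + κ * (s ^ P * (y s) ^ 3) / 3) *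
    (1 + μ * (s ^ P * (x s * y s)) / 2)

/-- The remainder in `Z' = -μ t^P E Z + Rex`. -/
noncomputable def Rex (lam μ κ P : ℝ) (x y : ℝ → ℝ) (t : ℝ) : ℝ :=
  t ^ P * t ^ P *
    (-(μ ^ 2 * (x t * y t / 2) * (((x t) ^ 2 + (y t) ^ 2) / 2 - lam / μ) * (y t) ^ 2)
      + κ * (y t) ^ 3 * (lam + κ * x t - μ * ((x t) ^ 2 + (y t) ^ 2) / 2)
      + μ * κ / 3 * (y t) ^ 5
      + μ * (((x t) ^ 2 + (y t) ^ 2) / 2 - lam / μ + κ * (t ^ P * (y t) ^ 3) / 3) *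
          (x t) * (y t) * (lam + κ * x t - μ * ((x t) ^ 2 + (y t) ^ 2) / 2) / 2
      + μ ^ 2 * (((x t) ^ 2 + (y t) ^ 2) / 2) * (x t * y t / 2) *
          (((x t) ^ 2 + (y t) ^ 2) / 2 - lam / μ + κ * (t ^ P * (y t) ^ 3) / 3))
  + t ^ P * t ^ P * t ^ P *
      (μ * κ * (x t * y t / 2) * (y t) ^ 3 * (lam + κ * x t - μ * ((x t) ^ 2 + (y t) ^ 2) / 2))
  + t ^ (P - 1) *
      (κ * P / 3 * (y t) ^ 3
        + μ * P * (((x t) ^ 2 + (y t) ^ 2) / 2 - lam / μ + κ * (t ^ P * (y t) ^ 3) / 3) *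
            (x t * y t / 2))
  + t ^ P * t ^ (P - 1) * (μ * κ * P / 3 * (x t * y t / 2) * (y t) ^ 3)

lemma Zf_deriv (lam μ κ P t : ℝ) (x y : ℝ → ℝ) (ht : 0 < t) (hμ : μ ≠ 0)
    (hx : HasDerivAt x (y t) t)
    (hy : HasDerivAt y (-x t + t ^ P * y t *
      (lam + κ * x t - μ * ((x t) ^ 2 + (y t) ^ 2) / 2)) t) :
    HasDerivAt (Zf lam μ κ P x y)
      (-(μ * t ^ P * (((x t) ^ 2 + (y t) ^ 2) / 2) * Zf lam μ κ P x y t)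
        + Rex lam μ κ P x y t) t := by
  have hA : HasDerivAt (fun s : ℝ => s ^ P) (P * t ^ (P - 1)) t :=
    Real.hasDerivAt_rpow_const (Or.inl ht.ne')
  have hE := ((hx.pow 2).add (hy.pow 2)).div_const 2
  have hW := (hE.sub_const (lam / μ)).add (((hA.mul (hy.pow 3)).const_mul κ).div_const 3)
  have hG := (((hA.mul (hx.mul hy)).const_mul μ).div_const 2).const_add 1
  have hZ := hW.mul hG
  refine hZ.congr_deriv ?_
  simp only [Zf, Rex, Pi.add_apply, Pi.mul_apply, Pi.pow_apply, Pi.sub_apply]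
  push_cast
  field_simp
  ring

lemma Rex_bound (lam μ κ P : ℝ) (x y : ℝ → ℝ) (t M rr KW CL : ℝ)
    (hμ0 : 0 ≤ μ)
    (hPb : |P| ≤ 1)
    (hA0 : 0 ≤ t ^ P) (hA1 : t ^ P ≤ 1)
    (hB0 : 0 ≤ t ^ (P - 1)) (hBA : t ^ (P - 1) ≤ t ^ P * t ^ P)
    (hX : |x t| ≤ M) (hY : |y t| ≤ M)
    (hV : |((x t) ^ 2 + (y t) ^ 2) / 2 - lam / μ| ≤ rr)
    (hE : |((x t) ^ 2 + (y t) ^ 2) / 2| ≤ 2 * rr)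
    (hL : |lam + κ * x t - μ * ((x t) ^ 2 + (y t) ^ 2) / 2| ≤ CL)
    (hW : |((x t) ^ 2 + (y t) ^ 2) / 2 - lam / μ + κ * (t ^ P * (y t) ^ 3) / 3| ≤ KW) :
    |Rex lam μ κ P x y t| ≤
      (μ ^ 2 * M ^ 2 * rr * M ^ 2 + |κ| * M ^ 3 * CL + μ * |κ| / 3 * M ^ 5
        + μ * KW * M * M * CL / 2 + μ ^ 2 * (2 * rr) * M ^ 2 * KW
        + μ * |κ| * M ^ 2 * M ^ 3 * CL + |κ| / 3 * M ^ 3 + μ * KW * M ^ 2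
        + μ * |κ| / 3 * M ^ 2 * M ^ 3) * (t ^ P * t ^ P) := by
  have hM : 0 ≤ M := (abs_nonneg (x t)).trans hX
  have hY2 : |(y t) ^ 2| ≤ M ^ 2 := by
    rw [abs_pow]; exact pow_le_pow_left₀ (abs_nonneg _) hY 2
  have hY3 : |(y t) ^ 3| ≤ M ^ 3 := by
    rw [abs_pow]; exact pow_le_pow_left₀ (abs_nonneg _) hY 3
  have hY5 : |(y t) ^ 5| ≤ M ^ 5 := by
    rw [abs_pow]; exact pow_le_pow_left₀ (abs_nonneg _) hY 5
  have hS : |x t * y t / 2| ≤ M ^ 2 := by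
    have h1 : |x t * y t| ≤ M * M := mbd hX hY
    rw [abs_div]
    have h2 : |(2:ℝ)| = 2 := by norm_num
    rw [h2]
    nlinarith
  have hmusq : |μ ^ 2| ≤ μ ^ 2 := le_of_eq (abs_of_nonneg (sq_nonneg μ))
  have hmu : |μ| ≤ μ := le_of_eq (abs_of_nonneg hμ0)
  have hkap : |κ| ≤ |κ| := le_refl _
  have habs3 : |(3:ℝ)| = 3 := by norm_num
  have habs2 : |(2:ℝ)| = 2 := by norm_num
  have hT1 : |μ ^ 2 * (x t * y t / 2) * (((x t) ^ 2 + (y t) ^ 2) / 2 - lam / μ) * (y t) ^ 2|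
      ≤ μ ^ 2 * M ^ 2 * rr * M ^ 2 := mbd (mbd (mbd hmusq hS) hV) hY2
  have hT2 : |κ * (y t) ^ 3 * (lam + κ * x t - μ * ((x t) ^ 2 + (y t) ^ 2) / 2)|
      ≤ |κ| * M ^ 3 * CL := mbd (mbd hkap hY3) hL
  have hmuk3 : |μ * κ / 3| ≤ μ * |κ| / 3 := by
    rw [abs_div, abs_mul, abs_of_nonneg hμ0, habs3]
  have hT3 : |μ * κ / 3 * (y t) ^ 5| ≤ μ * |κ| / 3 * M ^ 5 := mbd hmuk3 hY5
  have hT4 : |μ * (((x t) ^ 2 + (y t) ^ 2) / 2 - lam / μ + κ * (t ^ P * (y t) ^ 3) / 3) *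
      (x t) * (y t) * (lam + κ * x t - μ * ((x t) ^ 2 + (y t) ^ 2) / 2) / 2|
      ≤ μ * KW * M * M * CL / 2 := by
    have h1 := mbd (mbd (mbd (mbd hmu hW) hX) hY) hL
    rw [abs_div, habs2]
    linarith
  have hT5 : |μ ^ 2 * (((x t) ^ 2 + (y t) ^ 2) / 2) * (x t * y t / 2) *
      (((x t) ^ 2 + (y t) ^ 2) / 2 - lam / μ + κ * (t ^ P * (y t) ^ 3) / 3)|
      ≤ μ ^ 2 * (2 * rr) * M ^ 2 * KW := mbd (mbd (mbd hmusq hE) hS) hW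
  have hmuk : |μ * κ| ≤ μ * |κ| := by rw [abs_mul, abs_of_nonneg hμ0]
  have hT6 : |μ * κ * (x t * y t / 2) * (y t) ^ 3 *
      (lam + κ * x t - μ * ((x t) ^ 2 + (y t) ^ 2) / 2)|
      ≤ μ * |κ| * M ^ 2 * M ^ 3 * CL := mbd (mbd (mbd hmuk hS) hY3) hL
  have hkP3 : |κ * P / 3| ≤ |κ| / 3 := by
    rw [abs_div, abs_mul, habs3]
    have h2 := mul_le_mul_of_nonneg_left hPb (abs_nonneg κ)
    linarith
  have hT7 : |κ * P / 3 * (y t) ^ 3| ≤ |κ| / 3 * M ^ 3 := mbd hkP3 hY3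
  have hmuP : |μ * P| ≤ μ := by
    rw [abs_mul, abs_of_nonneg hμ0]
    have h2 := mul_le_mul_of_nonneg_left hPb hμ0
    linarith
  have hT8 : |μ * P * (((x t) ^ 2 + (y t) ^ 2) / 2 - lam / μ + κ * (t ^ P * (y t) ^ 3) / 3) *
      (x t * y t / 2)| ≤ μ * KW * M ^ 2 := mbd (mbd hmuP hW) hS
  have hmukP3 : |μ * κ * P / 3| ≤ μ * |κ| / 3 := by
    rw [abs_div, abs_mul, habs3]
    have h2 := mul_le_mul_of_nonneg_left hPb (abs_nonneg (μ * κ))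
    have h3 := mul_le_mul_of_nonneg_right hmuk (abs_nonneg P)
    have h4 : |P| * (μ * |κ|) = μ * |κ| * |P| := by ring
    nlinarith [abs_nonneg (μ * κ), abs_nonneg P, mul_nonneg hμ0 (abs_nonneg κ)]
  have hT9 : |μ * κ * P / 3 * (x t * y t / 2) * (y t) ^ 3|
      ≤ μ * |κ| / 3 * M ^ 2 * M ^ 3 := mbd (mbd hmukP3 hS) hY3
  have hT1n : |-(μ ^ 2 * (x t * y t / 2) * (((x t) ^ 2 + (y t) ^ 2) / 2 - lam / μ) * (y t) ^ 2)|
      ≤ μ ^ 2 * M ^ 2 * rr * M ^ 2 := by rw [abs_neg]; exact hT1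
  have hS1b := abs_add5 hT1n hT2 hT3 hT4 hT5
  have hS2b := abs_add2 hT7 hT8
  unfold Rex
  exact le_trans (rex_abs _ _ _ _ _ _ _ _ _ _ hA0 hA1 hB0 hBA hS1b hT6 hS2b hT9)
    (le_of_eq (by ring))

/-- for `1 ≤ n ≤ q`, `λ > 0`, `μ > 0`, the circle
`{(x,y) : (x² + y²)/2 = λ/μ}` is a stable limit cycle: solutions starting at a
late enough time with `(x² + y²)/2` close to `λ/μ` keep it within `ε` of `λ/μ`
for all later times, and `(x(t)² + y(t)²)/2 → λ/μ` as `t → ∞`. -/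
theorem stable_limit_cycle_example
    (q n : ℕ) (hq : 0 < q) (hn : 1 ≤ n) (hnq : n ≤ q)
    (lam μ κ : ℝ) (hlam : 0 < lam) (hμ : 0 < μ) :
    ∀ ε > 0, ∃ δ > 0, ∃ ts ≥ (1:ℝ), ∀ τ0 ≥ ts,
      ∀ x y : ℝ → ℝ, IsCycleSol q n lam μ κ τ0 x y →
        |((x τ0) ^ 2 + (y τ0) ^ 2) / 2 - lam / μ| ≤ δ →
        (∀ t ≥ τ0, |((x t) ^ 2 + (y t) ^ 2) / 2 - lam / μ| < ε) ∧
        Filter.Tendsto (fun t => ((x t) ^ 2 + (y t) ^ 2) / 2)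
          Filter.atTop (nhds (lam / μ)) := by
  intro ε hε
  have hr0 : 0 < lam / μ := div_pos hlam hμ
  set r := lam / μ with hrdef
  have hμr : μ * r = lam := by rw [hrdef]; field_simp
  set ρ := min ε (r / 2) with hρdef
  have hρ0 : 0 < ρ := lt_min hε (by linarith)
  have hρε : ρ ≤ ε := min_le_left _ _
  have hρr : ρ ≤ r / 2 := min_le_right _ _
  set M := 1 + 3 * r with hMdef
  have hM0 : 0 < M := by linarith
  set CL := 3 * lam + |κ| * M with hCLdef
  have hCL0 : 0 < CL := by
    have := mul_nonneg (abs_nonneg κ) hM0.le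
    linarith
  set KW := r + |κ| * M ^ 3 with hKWdef
  have hKW0 : 0 < KW := by
    have := mul_nonneg (abs_nonneg κ) (pow_pos hM0 3).le
    linarith
  set CR := μ ^ 2 * M ^ 2 * r * M ^ 2 + |κ| * M ^ 3 * CL + μ * |κ| / 3 * M ^ 5
      + μ * KW * M * M * CL / 2 + μ ^ 2 * (2 * r) * M ^ 2 * KW
      + μ * |κ| * M ^ 2 * M ^ 3 * CL + |κ| / 3 * M ^ 3 + μ * KW * M ^ 2
      + μ * |κ| / 3 * M ^ 2 * M ^ 3 with hCRdef
  have hCR0 : 0 ≤ CR := by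
    rw [hCRdef]
    have h1 := abs_nonneg κ
    have h2 : (0:ℝ) ≤ M := hM0.le
    have h3 : (0:ℝ) ≤ r := hr0.le
    have h4 : (0:ℝ) ≤ CL := hCL0.le
    have h5 : (0:ℝ) ≤ KW := hKW0.le
    have h6 : (0:ℝ) ≤ μ := hμ.le
    positivity
  set C1 := 3 * KW * CR + 1 with hC1def
  have hC10 : 0 < C1 := by
    rw [hC1def]
    have := mul_nonneg hKW0.le hCR0
    linarith
  set η := (ρ / 8) ^ 2 with hηdef
  have hη0 : 0 < η := by rw [hηdef]; positivity
  clear_value r ρ M CL KW CR C1 η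
  have hden1 : 0 < 1 + μ * M ^ 2 := by
    have := mul_nonneg hμ.le (pow_pos hM0 2).le
    linarith
  have hden2 : 0 < 11 * (1 + |κ|) * M ^ 3 := by
    have h1 := mul_nonneg (abs_nonneg κ) (pow_pos hM0 3).le
    have h2 := pow_pos hM0 3
    linarith
  set ε₀ := min (1 / (1 + μ * M ^ 2))
      (min (ρ / (11 * (1 + |κ|) * M ^ 3)) (lam * η / (2 * C1))) with hε₀def
  have hε₀0 : 0 < ε₀ := by
    rw [hε₀def]
    exact lt_min (div_pos one_pos hden1)
      (lt_min (div_pos hρ0 hden2) (div_pos (mul_pos hlam hη0) (by linarith)))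
  have hε₀1 : ε₀ ≤ 1 := by
    have h1 : 1 / (1 + μ * M ^ 2) ≤ 1 := by
      rw [div_le_one hden1]
      have := mul_nonneg hμ.le (pow_pos hM0 2).le
      linarith
    rw [hε₀def]
    exact (min_le_left _ _).trans h1
  have hε₀e1 : ε₀ ≤ 1 / (1 + μ * M ^ 2) := by rw [hε₀def]; exact min_le_left _ _
  have hε₀e2 : ε₀ ≤ ρ / (11 * (1 + |κ|) * M ^ 3) := by
    rw [hε₀def]; exact (min_le_right _ _).trans (min_le_left _ _)
  have hε₀e3 : ε₀ ≤ lam * η / (2 * C1) := by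
    rw [hε₀def]; exact (min_le_right _ _).trans (min_le_right _ _)
  clear_value ε₀
  obtain ⟨P, hPdef⟩ : ∃ P : ℝ, P = -(n:ℝ)/(q:ℝ) := ⟨_, rfl⟩
  have hq0 : (0:ℝ) < (q:ℝ) := by exact_mod_cast hq
  have hn0 : (0:ℝ) < (n:ℝ) := by exact_mod_cast hn
  have hPneg : P < 0 := by
    rw [hPdef]
    exact div_neg_of_neg_of_pos (by linarith) hq0
  have hPge : -1 ≤ P := by
    rw [hPdef, neg_div]
    apply neg_le_neg
    rw [div_le_one hq0]
    exact_mod_cast hnq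
  have hPabs : |P| ≤ 1 := abs_le.mpr ⟨hPge, hPneg.le.trans zero_le_one⟩
  have htend : Tendsto (fun t : ℝ => t ^ P) atTop (nhds 0) := by
    have h := tendsto_rpow_neg_atTop (show 0 < (n:ℝ)/(q:ℝ) from div_pos hn0 hq0)
    have he : P = -((n:ℝ)/(q:ℝ)) := by rw [hPdef, neg_div]
    rw [he]
    exact h
  have hev : ∀ᶠ t : ℝ in atTop, t ^ P < ε₀ := htend.eventually_lt_const hε₀0
  obtain ⟨ts₀, hts₀⟩ := eventually_atTop.mp hev
  refine ⟨ρ / 32, by linarith, max 1 ts₀, le_max_left _ _, ?_⟩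
  intro τ0 hτ0 x y hsol hinit
  have hτ1 : (1:ℝ) ≤ τ0 := (le_max_left 1 ts₀).trans hτ0
  have hts : ∀ t, τ0 ≤ t → t ^ P < ε₀ :=
    fun t ht => hts₀ t (((le_max_right 1 ts₀).trans hτ0).trans ht)
  have ht1 : ∀ t, τ0 ≤ t → (1:ℝ) ≤ t := fun t ht => hτ1.trans ht
  have ht0 : ∀ t, τ0 ≤ t → (0:ℝ) < t := fun t ht => lt_of_lt_of_le one_pos (ht1 t ht)
  have hxy : ∀ t, τ0 ≤ t → HasDerivAt x (y t) t ∧ HasDerivAt y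
      (-x t + t ^ P * y t * (lam + κ * x t - μ * ((x t) ^ 2 + (y t) ^ 2) / 2)) t := by
    intro t ht
    rw [hPdef]
    exact hsol t ht
  set Z : ℝ → ℝ := Zf lam μ κ P x y with hZdef
  set u : ℝ → ℝ := fun s => Z s ^ 2 with hudef
  have hZd : ∀ t, τ0 ≤ t → HasDerivAt Z
      (-(μ * t ^ P * (((x t) ^ 2 + (y t) ^ 2) / 2) * Z t) + Rex lam μ κ P x y t) t :=
    fun t ht => Zf_deriv lam μ κ P t x y (ht0 t ht) hμ.ne' (hxy t ht).1 (hxy t ht).2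
  have hud : ∀ t, τ0 ≤ t → HasDerivAt u
      (2 * Z t * (-(μ * t ^ P * (((x t) ^ 2 + (y t) ^ 2) / 2) * Z t)
        + Rex lam μ κ P x y t)) t := by
    intro t ht
    have h := (hZd t ht).pow 2
    refine h.congr_deriv ?_
    push_cast
    ring
  have hderiv : ∀ t, τ0 ≤ t → HasDerivAt u (deriv u t) t := by
    intro t ht
    rw [(hud t ht).deriv]
    exact hud t ht
  have hcdu : ∀ t, τ0 ≤ t → deriv u t
      = 2 * Z t * (-(μ * t ^ P * (((x t) ^ 2 + (y t) ^ 2) / 2) * Z t)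
        + Rex lam μ κ P x y t) :=
    fun t ht => (hud t ht).deriv
  have hunn : ∀ s, 0 ≤ u s := fun s => sq_nonneg (Z s)
  -- correction term is uniformly small
  have hcorrA : ∀ t, τ0 ≤ t → |κ| * M ^ 3 * t ^ P ≤ ρ / 11 := by
    intro t ht
    have hA0 : (0:ℝ) < t ^ P := Real.rpow_pos_of_pos (ht0 t ht) P
    have h1 : t ^ P ≤ ρ / (11 * (1 + |κ|) * M ^ 3) :=
      (hts t ht).le.trans hε₀e2
    have h2 : |κ| * M ^ 3 * t ^ P ≤ |κ| * M ^ 3 * (ρ / (11 * (1 + |κ|) * M ^ 3)) :=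
      mul_le_mul_of_nonneg_left h1 (mul_nonneg (abs_nonneg κ) (pow_pos hM0 3).le)
    refine h2.trans ?_
    rw [mul_div_assoc', div_le_div_iff₀ hden2 (by norm_num : (0:ℝ) < 11)]
    have h3 := mul_nonneg hρ0.le (pow_pos hM0 3).le
    linarith
  -- core estimate under the region condition
  have hcore : ∀ t, τ0 ≤ t → |((x t) ^ 2 + (y t) ^ 2) / 2 - r| ≤ ρ →
      (deriv u t ≤ t ^ P * (-(lam * u t) + C1 * t ^ P)
        ∧ |((x t) ^ 2 + (y t) ^ 2) / 2 - r| ≤ 2 * |Z t| + |κ| * M ^ 3 * t ^ P / 3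
        ∧ |Z t| ≤ 3 / 2 * (|((x t) ^ 2 + (y t) ^ 2) / 2 - r| + |κ| * M ^ 3 * t ^ P / 3)) := by
    intro t ht hreg
    have hA0 : (0:ℝ) < t ^ P := Real.rpow_pos_of_pos (ht0 t ht) P
    have hAε := hts t ht
    have hA1 : t ^ P ≤ 1 := hAε.le.trans hε₀1
    have hB0 : (0:ℝ) ≤ t ^ (P - 1) := Real.rpow_nonneg (ht0 t ht).le _
    have hBA : t ^ (P - 1) ≤ t ^ P * t ^ P := by
      have h1 : t ^ (P - 1) = t ^ P * t ^ (-1:ℝ) := by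
        rw [sub_eq_add_neg, Real.rpow_add (ht0 t ht)]
      have h2 : t ^ (-1:ℝ) ≤ t ^ P := Real.rpow_le_rpow_of_exponent_le (ht1 t ht) hPge
      rw [h1]
      exact mul_le_mul_of_nonneg_left h2 hA0.le
    have habs := abs_le.mp hreg
    have hsum : (x t) ^ 2 + (y t) ^ 2 ≤ 3 * r := by linarith [habs.2]
    have hEnn : (0:ℝ) ≤ ((x t) ^ 2 + (y t) ^ 2) / 2 := by positivity
    have hX : |x t| ≤ M := by
      rw [hMdef]
      exact abs_le_one_add3 hsum
    have hY : |y t| ≤ M := by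
      rw [hMdef]
      exact abs_le_one_add3 (by linarith : (y t) ^ 2 + (x t) ^ 2 ≤ 3 * r)
    have hY3 : |(y t) ^ 3| ≤ M ^ 3 := by
      rw [abs_pow]; exact pow_le_pow_left₀ (abs_nonneg _) hY 3
    have hV : |((x t) ^ 2 + (y t) ^ 2) / 2 - lam / μ| ≤ r := by
      rw [← hrdef]
      exact hreg.trans (by linarith)
    have hE : |((x t) ^ 2 + (y t) ^ 2) / 2| ≤ 2 * r := by
      rw [abs_of_nonneg hEnn]
      linarith [habs.2]
    have hL : |lam + κ * x t - μ * ((x t) ^ 2 + (y t) ^ 2) / 2| ≤ CL := by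
      have h1 : |κ * x t| ≤ |κ| * M := mbd (le_refl _) hX
      have h2 : |μ * ((x t) ^ 2 + (y t) ^ 2) / 2| ≤ 3 / 2 * lam := by
        rw [abs_div, abs_mul, abs_of_nonneg hμ.le,
          abs_of_nonneg (by positivity : (0:ℝ) ≤ (x t) ^ 2 + (y t) ^ 2)]
        have h3 : |(2:ℝ)| = 2 := by norm_num
        rw [h3]
        have h9 := mul_le_mul_of_nonneg_left hsum hμ.le
        linarith
      calc |lam + κ * x t - μ * ((x t) ^ 2 + (y t) ^ 2) / 2|
          ≤ |lam + κ * x t| + |μ * ((x t) ^ 2 + (y t) ^ 2) / 2| := abs_sub' _ _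
        _ ≤ |lam| + |κ * x t| + |μ * ((x t) ^ 2 + (y t) ^ 2) / 2| := by
            linarith [abs_add_le lam (κ * x t)]
        _ ≤ CL := by
            rw [abs_of_nonneg hlam.le, hCLdef]
            linarith
    have hcorr3 : |κ * (t ^ P * (y t) ^ 3) / 3| ≤ |κ| * M ^ 3 * t ^ P / 3 := by
      have h3 : |κ * (t ^ P * (y t) ^ 3)| ≤ |κ| * (t ^ P * M ^ 3) :=
        mbd (le_refl _) (mbd (le_of_eq (abs_of_nonneg hA0.le)) hY3)
      rw [abs_div]
      have h2 : |(3:ℝ)| = 3 := by norm_num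
      rw [h2]
      have h4 : |κ| * (t ^ P * M ^ 3) = |κ| * M ^ 3 * t ^ P := by ring
      linarith [h4 ▸ h3]
    have hWb : |((x t) ^ 2 + (y t) ^ 2) / 2 - lam / μ + κ * (t ^ P * (y t) ^ 3) / 3| ≤ KW := by
      have h4 := abs_add_le (((x t) ^ 2 + (y t) ^ 2) / 2 - lam / μ) (κ * (t ^ P * (y t) ^ 3) / 3)
      have h5 : |κ| * M ^ 3 * t ^ P / 3 ≤ |κ| * M ^ 3 := by
        have h6 := mul_le_mul_of_nonneg_left hA1
          (mul_nonneg (abs_nonneg κ) (pow_pos hM0 3).le)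
        have h7 := mul_nonneg (mul_nonneg (abs_nonneg κ) (pow_pos hM0 3).le) hA0.le
        linarith
      rw [hKWdef]
      linarith [hcorr3]
    have hRb := Rex_bound lam μ κ P x y t M r KW CL hμ.le hPabs hA0.le hA1 hB0 hBA
      hX hY hV hE hL hWb
    rw [← hCRdef] at hRb
    -- G bounds
    have hGb : |μ * (t ^ P * (x t * y t)) / 2| ≤ 1 / 2 := by
      have h1 : t ^ P ≤ 1 / (1 + μ * M ^ 2) := hAε.le.trans hε₀e1
      have h2 : |x t * y t| ≤ M * M := mbd hX hY
      have h3 : |μ * (t ^ P * (x t * y t))| ≤ μ * (t ^ P * (M * M)) :=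
        mbd (le_of_eq (abs_of_nonneg hμ.le)) (mbd (le_of_eq (abs_of_nonneg hA0.le)) h2)
      have h4 : μ * (t ^ P * (M * M)) ≤ 1 := by
        have h5 := mul_le_mul_of_nonneg_left h1
          (mul_nonneg hμ.le (mul_nonneg hM0.le hM0.le))
        have h6 : μ * (M * M) * (1 / (1 + μ * M ^ 2)) ≤ 1 := by
          rw [mul_one_div, div_le_one hden1]
          have := mul_nonneg hμ.le (sq_nonneg M)
          linarith
        linarith [h5, h6]
      rw [abs_div]
      have h7 : |(2:ℝ)| = 2 := by norm_num
      rw [h7]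
      linarith [h3]
    have hG12 := abs_le.mp hGb
    have hGpos : (0:ℝ) < 1 + μ * (t ^ P * (x t * y t)) / 2 := by linarith [hG12.1]
    have hG32 : 1 + μ * (t ^ P * (x t * y t)) / 2 ≤ 3 / 2 := by linarith [hG12.2]
    have hZeq : Z t = (((x t) ^ 2 + (y t) ^ 2) / 2 - lam / μ + κ * (t ^ P * (y t) ^ 3) / 3) *
        (1 + μ * (t ^ P * (x t * y t)) / 2) := rfl
    have hZabs : |Z t| = |((x t) ^ 2 + (y t) ^ 2) / 2 - lam / μ + κ * (t ^ P * (y t) ^ 3) / 3|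
        * (1 + μ * (t ^ P * (x t * y t)) / 2) := by
      rw [hZeq, abs_mul, abs_of_pos hGpos]
    have hWr : ((x t) ^ 2 + (y t) ^ 2) / 2 - lam / μ + κ * (t ^ P * (y t) ^ 3) / 3
        = (((x t) ^ 2 + (y t) ^ 2) / 2 - r) + κ * (t ^ P * (y t) ^ 3) / 3 := by
      rw [hrdef]
    have hWV : |((x t) ^ 2 + (y t) ^ 2) / 2 - lam / μ + κ * (t ^ P * (y t) ^ 3) / 3|
        ≤ |((x t) ^ 2 + (y t) ^ 2) / 2 - r| + |κ| * M ^ 3 * t ^ P / 3 := by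
      rw [hWr]
      exact (abs_add_le _ _).trans (by linarith [hcorr3])
    have hW2Z : |((x t) ^ 2 + (y t) ^ 2) / 2 - lam / μ + κ * (t ^ P * (y t) ^ 3) / 3|
        ≤ 2 * |Z t| := by
      have h9 := mul_le_mul_of_nonneg_left
        (show (1:ℝ)/2 ≤ 1 + μ * (t ^ P * (x t * y t)) / 2 by linarith [hG12.1])
        (abs_nonneg (((x t) ^ 2 + (y t) ^ 2) / 2 - lam / μ + κ * (t ^ P * (y t) ^ 3) / 3))
      linarith [hZabs, h9]
    refine ⟨?_, ?_, ?_⟩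
    · -- derivative inequality
      rw [hcdu t ht]
      have hZbound : |Z t| ≤ 3 / 2 * KW := by
        rw [hZabs]
        calc |((x t) ^ 2 + (y t) ^ 2) / 2 - lam / μ + κ * (t ^ P * (y t) ^ 3) / 3|
            * (1 + μ * (t ^ P * (x t * y t)) / 2)
            ≤ KW * (3 / 2) := mul_le_mul hWb hG32 hGpos.le hKW0.le
          _ = 3 / 2 * KW := by ring
      have e1 : 2 * Z t * Rex lam μ κ P x y t
          ≤ 2 * (|Z t| * |Rex lam μ κ P x y t|) := by
        have e2 : |Z t * Rex lam μ κ P x y t| = |Z t| * |Rex lam μ κ P x y t| := abs_mul _ _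
        have e4 := le_abs_self (Z t * Rex lam μ κ P x y t)
        linarith
      have e3 : |Z t| * |Rex lam μ κ P x y t| ≤ (3 / 2 * KW) * (CR * (t ^ P * t ^ P)) :=
        mul_le_mul hZbound hRb (abs_nonneg _) (by linarith)
      have hEelb : r / 2 ≤ ((x t) ^ 2 + (y t) ^ 2) / 2 := by linarith [habs.1]
      have hmuE : lam ≤ 2 * μ * (((x t) ^ 2 + (y t) ^ 2) / 2) := by
        have h9 := mul_nonneg hμ.le (sub_nonneg.mpr hEelb)
        linarith [h9]
      have k1 : 0 ≤ (2 * μ * (((x t) ^ 2 + (y t) ^ 2) / 2) - lam) * (t ^ P * Z t ^ 2) :=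
        mul_nonneg (by linarith) (mul_nonneg hA0.le (sq_nonneg _))
      have k2 : 3 * KW * CR * (t ^ P * t ^ P) ≤ C1 * (t ^ P * t ^ P) := by
        have k3 : 0 ≤ t ^ P * t ^ P := mul_nonneg hA0.le hA0.le
        rw [hC1def]
        linarith
      have hueq : u t = Z t ^ 2 := rfl
      have m2 : 2 * Z t * Rex lam μ κ P x y t ≤ C1 * (t ^ P * t ^ P) := by
        linarith [e1, e3, k2]
      have m3 : -(2 * μ * t ^ P * (((x t) ^ 2 + (y t) ^ 2) / 2) * Z t ^ 2)
          ≤ -(lam * t ^ P * Z t ^ 2) := by linarith [k1]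
      calc 2 * Z t * (-(μ * t ^ P * (((x t) ^ 2 + (y t) ^ 2) / 2) * Z t)
            + Rex lam μ κ P x y t)
          = -(2 * μ * t ^ P * (((x t) ^ 2 + (y t) ^ 2) / 2) * Z t ^ 2)
            + 2 * Z t * Rex lam μ κ P x y t := by ring
        _ ≤ -(lam * t ^ P * Z t ^ 2) + C1 * (t ^ P * t ^ P) := by linarith [m2, m3]
        _ = t ^ P * (-(lam * u t) + C1 * t ^ P) := by rw [hueq]; ring
    · -- |V| ≤ 2|Z| + corr
      have h6 : |((x t) ^ 2 + (y t) ^ 2) / 2 - r| ≤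
          |((x t) ^ 2 + (y t) ^ 2) / 2 - lam / μ + κ * (t ^ P * (y t) ^ 3) / 3|
            + |κ| * M ^ 3 * t ^ P / 3 := by
        have e2 : ((x t) ^ 2 + (y t) ^ 2) / 2 - r
            = (((x t) ^ 2 + (y t) ^ 2) / 2 - lam / μ + κ * (t ^ P * (y t) ^ 3) / 3)
              - κ * (t ^ P * (y t) ^ 3) / 3 := by
          rw [hrdef]; ring
        rw [e2]
        exact (abs_sub' _ _).trans (by linarith [hcorr3])
      linarith [hW2Z]
    · -- |Z| ≤ 3/2 (|V| + corr)
      rw [hZabs]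
      calc |((x t) ^ 2 + (y t) ^ 2) / 2 - lam / μ + κ * (t ^ P * (y t) ^ 3) / 3|
          * (1 + μ * (t ^ P * (x t * y t)) / 2)
          ≤ (|((x t) ^ 2 + (y t) ^ 2) / 2 - r| + |κ| * M ^ 3 * t ^ P / 3) * (3 / 2) :=
            mul_le_mul hWV hG32 hGpos.le ((abs_nonneg _).trans hWV)
        _ = 3 / 2 * (|((x t) ^ 2 + (y t) ^ 2) / 2 - r| + |κ| * M ^ 3 * t ^ P / 3) := by ring
  -- continuity of the energy deviation
  have hVcont : ∀ s, τ0 ≤ s → ContinuousAt (fun w => |((x w) ^ 2 + (y w) ^ 2) / 2 - r|) s := by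
    intro s hs
    have hxc := (hxy s hs).1.continuousAt
    have hyc := (hxy s hs).2.continuousAt
    exact ((((hxc.pow 2).add (hyc.pow 2)).div_const 2).sub continuousAt_const).abs
  have hinit' : |((x τ0) ^ 2 + (y τ0) ^ 2) / 2 - r| ≤ ρ / 32 := hinit
  -- region propagation
  have hregion : ∀ t, τ0 ≤ t → (∀ s, τ0 ≤ s → s ≤ t → u s ≤ η) →
      ∀ s, τ0 ≤ s → s ≤ t → |((x s) ^ 2 + (y s) ^ 2) / 2 - r| < ρ := by
    intro t ht hist
    refine no_crossing _ τ0 t ρ (fun s hs _ => hVcont s hs)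
      (lt_of_le_of_lt hinit' (by linarith)) ?_
    intro s hsa hsb hle
    have hcs := hcore s hsa hle
    have hus := hist s hsa hsb
    have huq : u s = Z s ^ 2 := rfl
    have hZs : |Z s| ≤ ρ / 8 := by
      refine abs_le_of_sq (by linarith) ?_
      rw [← huq, ← hηdef]
      exact hus
    have hcA := hcorrA s hsa
    linarith [hcs.2.1]
  -- initial smallness of u
  have h0 : u τ0 < η := by
    have hreg0 : |((x τ0) ^ 2 + (y τ0) ^ 2) / 2 - r| ≤ ρ := hinit'.trans (by linarith)
    have hc0 := (hcore τ0 le_rfl hreg0).2.2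
    have hcA := hcorrA τ0 le_rfl
    have hZ0 : |Z τ0| < ρ / 8 := by
      have : |Z τ0| ≤ 3 / 2 * (ρ / 32 + ρ / 33) := by
        refine hc0.trans ?_
        have : |((x τ0) ^ 2 + (y τ0) ^ 2) / 2 - r| + |κ| * M ^ 3 * τ0 ^ P / 3
            ≤ ρ / 32 + ρ / 33 := by linarith
        linarith
      linarith
    have huq : u τ0 = Z τ0 ^ 2 := rfl
    rw [huq, hηdef]
    exact sq_lt_of_abs_lt hZ0
  -- invariance: u stays below η
  have hinv : ∀ t, τ0 ≤ t → u t < η := by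
    refine barrier u (deriv u) τ0 η hderiv h0 ?_
    intro t ht hist heq
    have hregs := hregion t ht hist t ht le_rfl
    have ha := (hcore t ht hregs.le).1
    have hA0 : (0:ℝ) < t ^ P := Real.rpow_pos_of_pos (ht0 t ht) P
    have hC1A : C1 * t ^ P ≤ lam * η / 2 := by
      have h1 : t ^ P ≤ lam * η / (2 * C1) := (hts t ht).le.trans hε₀e3
      have h2 := mul_le_mul_of_nonneg_left h1 hC10.le
      have h3 : C1 * (lam * η / (2 * C1)) = lam * η / 2 := by
        field_simp
      linarith
    have h4 : -(lam * u t) + C1 * t ^ P ≤ -(lam * η / 2) := by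
      rw [heq]
      linarith
    have h5 : deriv u t ≤ t ^ P * (-(lam * η / 2)) :=
      ha.trans (mul_le_mul_of_nonneg_left h4 hA0.le)
    have h6 : t ^ P * (-(lam * η / 2)) < 0 :=
      mul_neg_of_pos_of_neg hA0 (by linarith [mul_pos hlam hη0])
    linarith
  have hglob : ∀ s, τ0 ≤ s → |((x s) ^ 2 + (y s) ^ 2) / 2 - r| ≤ ρ :=
    fun s hs => (hregion s hs (fun w h1 _ => (hinv w h1).le) s hs le_rfl).le
  constructor
  · -- stability estimate
    intro t ht
    have hu := hinv t ht
    have hb := (hcore t ht (hglob t ht)).2.1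
    have huq : u t = Z t ^ 2 := rfl
    have hZt : |Z t| ≤ ρ / 8 := by
      refine abs_le_of_sq (by linarith) ?_
      rw [← huq, ← hηdef]
      exact hu.le
    have hcA := hcorrA t ht
    have : |((x t) ^ 2 + (y t) ^ 2) / 2 - r| ≤ 2 * (ρ / 8) + (ρ / 11) / 3 := by
      linarith
    linarith
  · -- convergence
    have htu : Tendsto u atTop (nhds 0) := by
      rw [tendsto_order]
      constructor
      · intro c hc
        exact Eventually.of_forall fun s => lt_of_lt_of_le hc (hunn s)
      · intro c hc
        have hev2 : ∀ᶠ t : ℝ in atTop, t ^ P < min ε₀ (lam * c / (2 * C1)) :=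
          htend.eventually_lt_const (lt_min hε₀0 (div_pos (mul_pos hlam hc) (by linarith)))
        obtain ⟨T₀, hT₀⟩ := eventually_atTop.mp hev2
        set T := max τ0 T₀ with hTdef
        have hTτ : τ0 ≤ T := le_max_left _ _
        have hT1' : (1:ℝ) ≤ T := hτ1.trans hTτ
        have hkpos : 0 < lam * c / 2 := by positivity
        have hdec : ∀ t, T ≤ t → c ≤ u t → deriv u t ≤ -((lam * c / 2) / t) := by
          intro t htT hcu
          have htτ : τ0 ≤ t := hTτ.trans htT
          have ha := (hcore t htτ (hglob t htτ)).1
          have hA0 : (0:ℝ) < t ^ P := Real.rpow_pos_of_pos (ht0 t htτ) P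
          have hsm2 := hT₀ t ((le_max_right _ _).trans htT)
          have hC1A : C1 * t ^ P ≤ lam * c / 2 := by
            have h1 : t ^ P ≤ lam * c / (2 * C1) := hsm2.le.trans (min_le_right _ _)
            have h2 := mul_le_mul_of_nonneg_left h1 hC10.le
            have h3 : C1 * (lam * c / (2 * C1)) = lam * c / 2 := by
              field_simp
            linarith
          have hAinv : t⁻¹ ≤ t ^ P := by
            have h := Real.rpow_le_rpow_of_exponent_le (ht1 t htτ) hPge
            rwa [Real.rpow_neg_one] at h
          have h4 : -(lam * u t) + C1 * t ^ P ≤ -(lam * c / 2) := by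
            have h9 := mul_le_mul_of_nonneg_left hcu hlam.le
            linarith
          have h5 : deriv u t ≤ t ^ P * (-(lam * c / 2)) :=
            ha.trans (mul_le_mul_of_nonneg_left h4 hA0.le)
          have h6 : t ^ P * (-(lam * c / 2)) ≤ t⁻¹ * (-(lam * c / 2)) := by
            have h9 := mul_le_mul_of_nonneg_right hAinv hkpos.le
            linarith
          have h7 : t⁻¹ * (-(lam * c / 2)) = -((lam * c / 2) / t) := by
            rw [div_eq_mul_inv]
            ring
          linarith
        obtain ⟨t₂, ht₂T, ht₂⟩ := escape u (deriv u) T (lam * c / 2) c hT1' hkpos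
          (fun t ht => hderiv t (hTτ.trans ht)) (fun t _ => hunn t) hdec
        have hbar2 : ∀ t, t₂ ≤ t → u t < c := by
          refine barrier u (deriv u) t₂ c
            (fun t ht => hderiv t (hTτ.trans (ht₂T.trans ht))) ht₂ ?_
          intro t ht _ heq
          have hd := hdec t (ht₂T.trans ht) (le_of_eq heq.symm)
          have htpos : (0:ℝ) < t := ht0 t (hTτ.trans (ht₂T.trans ht))
          have : 0 < (lam * c / 2) / t := div_pos hkpos htpos
          linarith
        exact eventually_atTop.mpr ⟨t₂, fun t ht => hbar2 t ht⟩
    have hVb : ∀ t, τ0 ≤ t → |((x t) ^ 2 + (y t) ^ 2) / 2 - r|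
        ≤ 2 * Real.sqrt (u t) + |κ| * M ^ 3 * t ^ P := by
      intro t ht
      have hb := (hcore t ht (hglob t ht)).2.1
      have hsq : Real.sqrt (u t) = |Z t| := Real.sqrt_sq_eq_abs _
      have hA0 : (0:ℝ) ≤ t ^ P := (Real.rpow_pos_of_pos (ht0 t ht) P).le
      have h8 : |κ| * M ^ 3 * t ^ P / 3 ≤ |κ| * M ^ 3 * t ^ P := by
        have h9 := mul_nonneg (mul_nonneg (abs_nonneg κ) (pow_pos hM0 3).le) hA0
        linarith
      rw [hsq]
      linarith
    have hsq0 : Tendsto (fun t => Real.sqrt (u t)) atTop (nhds 0) := by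
      have h := (Real.continuous_sqrt.tendsto 0).comp htu
      simpa [Function.comp_def] using h
    have hbnd0 : Tendsto (fun t => 2 * Real.sqrt (u t) + |κ| * M ^ 3 * t ^ P) atTop (nhds 0) := by
      have h1 := hsq0.const_mul (2:ℝ)
      have h2 := htend.const_mul (|κ| * M ^ 3)
      have h := h1.add h2
      simpa using h
    have hneg0 : Tendsto (fun t => -(2 * Real.sqrt (u t) + |κ| * M ^ 3 * t ^ P))
        atTop (nhds 0) := by
      have h := hbnd0.neg
      simpa using h
    have hEtend : Tendsto (fun t => ((x t) ^ 2 + (y t) ^ 2) / 2 - r) atTop (nhds 0) := by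
      refine tendsto_of_tendsto_of_tendsto_of_le_of_le' hneg0 hbnd0 ?_ ?_
      · exact eventually_atTop.mpr ⟨τ0, fun t ht => (abs_le.mp (hVb t ht)).1⟩
      · exact eventually_atTop.mpr ⟨τ0, fun t ht => (abs_le.mp (hVb t ht)).2⟩
    have h := hEtend.add_const r
    simpa using h
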